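/- For any three discrete random variables A, B, C on a finite probability space such that B and C are independent, the conditional entropies satisfy H(A|B) + H(A|C) ≥ H(A) + H(A|B,C). -/

import Mathlib

open Finset

/-- Probability of the event `X = k` for a weight function `p` on a finite space. -/
noncomputable def probOf {Ω κ : Type*} [Fintype Ω] [DecidableEq κ]
    (p : Ω → ℝ) (X : Ω → κ) (k : κ) : ℝ :=
  ∑ ω ∈ Finset.univ.filter (fun ω => X ω = k), p ω

/-- Shannon entropy of a discrete random variable `X` on a finite probability space
with weights `p`. -/
noncomputable def shannonH {Ω κ : Type*} [Fintype Ω] [Fintype κ] [DecidableEq κ]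
    (p : Ω → ℝ) (X : Ω → κ) : ℝ :=
  - ∑ k : κ, probOf p X k * Real.log (probOf p X k)

/-- Conditional entropy H(A|B) = H(A,B) - H(B). -/
noncomputable def condH {Ω κ₁ κ₂ : Type*} [Fintype Ω] [Fintype κ₁] [Fintype κ₂]
    [DecidableEq κ₁] [DecidableEq κ₂] (p : Ω → ℝ) (A : Ω → κ₁) (B : Ω → κ₂) : ℝ :=
  shannonH p (fun ω => (A ω, B ω)) - shannonH p B


section auxiliary

variable {Ω κ : Type*} [Fintype Ω] [DecidableEq κ]

lemma probOf_nonneg (p : Ω → ℝ) (hp0 : ∀ ω, 0 ≤ p ω) (X : Ω → κ) (k : κ) :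
    0 ≤ probOf p X k := Finset.sum_nonneg fun ω _ => hp0 ω

lemma le_probOf (p : Ω → ℝ) (hp0 : ∀ ω, 0 ≤ p ω) (X : Ω → κ) (ω : Ω) :
    p ω ≤ probOf p X (X ω) :=
  Finset.single_le_sum (fun i _ => hp0 i) (Finset.mem_filter.2 ⟨Finset.mem_univ ω, rfl⟩)

lemma pushforward [Fintype κ] (p : Ω → ℝ) (X : Ω → κ) (f : κ → ℝ) :
    ∑ k : κ, probOf p X k * f k = ∑ ω : Ω, p ω * f (X ω) := by
  unfold probOf
  simp_rw [Finset.sum_mul, Finset.sum_filter]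
  rw [Finset.sum_comm]
  refine Finset.sum_congr rfl fun ω _ => ?_
  rw [Finset.sum_ite_eq univ (X ω) (fun k => p ω * f k)]
  simp

lemma probOf_total (p : Ω → ℝ) (hp1 : ∑ ω : Ω, p ω = 1) [Fintype κ] (X : Ω → κ) :
    ∑ k : κ, probOf p X k = 1 := by
  have := pushforward p X (fun _ => 1)
  simpa [hp1] using this

lemma marginal {κ' : Type*} [Fintype κ'] [DecidableEq κ']
    (p : Ω → ℝ) (A : Ω → κ) (B : Ω → κ') (x : κ) :
    ∑ y : κ', probOf p (fun ω => (A ω, B ω)) (x, y) = probOf p A x := by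
  unfold probOf
  simp_rw [Finset.sum_filter]
  rw [Finset.sum_comm]
  refine Finset.sum_congr rfl fun ω _ => ?_
  by_cases h : A ω = x <;> simp [Prod.ext_iff, h]

end auxiliary

lemma shannonH_eq_omega_sum {Ω κ : Type*} [Fintype Ω] [Fintype κ] [DecidableEq κ]
    (p : Ω → ℝ) (X : Ω → κ) :
    shannonH p X = - ∑ ω : Ω, p ω * Real.log (probOf p X (X ω)) := by
  unfold shannonH
  rw [pushforward p X (fun k => Real.log (probOf p X k))]

lemma shannonH_pair_of_indep {Ω β γ : Type*} [Fintype Ω] [Fintype β] [Fintype γ]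
    [DecidableEq β] [DecidableEq γ]
    (p : Ω → ℝ) (hp1 : ∑ ω : Ω, p ω = 1) (B : Ω → β) (C : Ω → γ)
    (hindep : ∀ (b : β) (c : γ),
      probOf p (fun ω => (B ω, C ω)) (b, c) = probOf p B b * probOf p C c) :
    shannonH p (fun ω => (B ω, C ω)) = shannonH p B + shannonH p C := by
  have hB : ∑ b : β, probOf p B b = 1 := probOf_total p hp1 B
  have hC : ∑ c : γ, probOf p C c = 1 := probOf_total p hp1 C
  unfold shannonH
  rw [Fintype.sum_prod_type]
  have hterm : ∀ (b : β) (c : γ),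
      probOf p (fun ω => (B ω, C ω)) (b, c) *
        Real.log (probOf p (fun ω => (B ω, C ω)) (b, c)) =
      probOf p C c * (probOf p B b * Real.log (probOf p B b)) +
      probOf p B b * (probOf p C c * Real.log (probOf p C c)) := by
    intro b c
    rw [hindep]
    by_cases hb : probOf p B b = 0
    · simp [hb]
    by_cases hc : probOf p C c = 0
    · simp [hc]
    rw [Real.log_mul hb hc]
    ring
  simp_rw [hterm, Finset.sum_add_distrib, ← Finset.mul_sum, ← Finset.sum_mul, hB, hC]
  ring

lemma submodular {Ω α β γ : Type*} [Fintype Ω] [Fintype α] [Fintype β] [Fintype γ]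
    [DecidableEq α] [DecidableEq β] [DecidableEq γ]
    (p : Ω → ℝ) (hp0 : ∀ ω, 0 ≤ p ω) (hp1 : ∑ ω : Ω, p ω = 1)
    (A : Ω → α) (B : Ω → β) (C : Ω → γ) :
    shannonH p (fun ω => (A ω, B ω)) + shannonH p (fun ω => (A ω, C ω)) ≥
      shannonH p A + shannonH p (fun ω => (A ω, (B ω, C ω))) := by
  set pA : α → ℝ := probOf p A with hpA
  set pAB : α × β → ℝ := probOf p (fun ω => (A ω, B ω)) with hpAB
  set pAC : α × γ → ℝ := probOf p (fun ω => (A ω, C ω)) with hpAC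
  set P : α × β × γ → ℝ := probOf p (fun ω => (A ω, (B ω, C ω))) with hP
  have hpA0 : ∀ x, 0 ≤ pA x := probOf_nonneg p hp0 A
  have hpAB0 : ∀ t, 0 ≤ pAB t := probOf_nonneg p hp0 _
  have hpAC0 : ∀ t, 0 ≤ pAC t := probOf_nonneg p hp0 _
  have hP0 : ∀ t, 0 ≤ P t := probOf_nonneg p hp0 _
  -- the ratio function
  set g : α × β × γ → ℝ :=
    fun t => pAB (t.1, t.2.1) * pAC (t.1, t.2.2) / (pA t.1 * P t) with hg
  -- Step 2 : ∑ ω, p ω * g (A ω, B ω, C ω) ≤ 1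
  have step2 : ∑ ω : Ω, p ω * g (A ω, B ω, C ω) ≤ 1 := by
    rw [← pushforward p (fun ω => (A ω, (B ω, C ω))) g]
    have h1 : ∀ t : α × β × γ,
        P t * g t ≤ pAB (t.1, t.2.1) * pAC (t.1, t.2.2) / pA t.1 := by
      intro t
      by_cases hPt : P t = 0
      · rw [hPt, zero_mul]
        exact div_nonneg (mul_nonneg (hpAB0 _) (hpAC0 _)) (hpA0 _)
      by_cases hAt : pA t.1 = 0
      · simp [hg, hAt]
      have : P t * g t = pAB (t.1, t.2.1) * pAC (t.1, t.2.2) / pA t.1 := by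
        rw [hg]; dsimp only
        rw [mul_div_assoc', div_eq_div_iff (mul_ne_zero hAt hPt) hAt]
        ring
      rw [this]
    calc ∑ t : α × β × γ, P t * g t
        ≤ ∑ t : α × β × γ, pAB (t.1, t.2.1) * pAC (t.1, t.2.2) / pA t.1 :=
          Finset.sum_le_sum fun t _ => h1 t
      _ ≤ ∑ x : α, pA x := by
          rw [Fintype.sum_prod_type]
          refine Finset.sum_le_sum fun x _ => ?_
          have heq : ∑ yz : β × γ, pAB (x, yz.1) * pAC (x, yz.2) / pA x
              = (∑ y : β, pAB (x, y)) * (∑ z : γ, pAC (x, z)) / pA x := by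
            rw [← Finset.sum_div, Finset.sum_mul_sum, Fintype.sum_prod_type]
          rw [heq, marginal p A B x, marginal p A C x]
          by_cases hx : pA x = 0
          · simp [hx]
          · rw [mul_div_assoc, div_self hx, mul_one]
      _ = 1 := probOf_total p hp1 A
  -- Step 1 : pointwise bound via log x ≤ x - 1
  have step1 : ∀ ω : Ω,
      p ω * (Real.log (pA (A ω)) + Real.log (P (A ω, B ω, C ω))
        - Real.log (pAB (A ω, B ω)) - Real.log (pAC (A ω, C ω)))
      ≥ p ω - p ω * g (A ω, B ω, C ω) := by
    intro ω
    rcases eq_or_lt_of_le (hp0 ω) with hω | hω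
    · simp [← hω]
    have h1 : 0 < pA (A ω) := lt_of_lt_of_le hω (le_probOf p hp0 A ω)
    have h2 : 0 < pAB (A ω, B ω) := lt_of_lt_of_le hω (le_probOf p hp0 (fun ω => (A ω, B ω)) ω)
    have h3 : 0 < pAC (A ω, C ω) := lt_of_lt_of_le hω (le_probOf p hp0 (fun ω => (A ω, C ω)) ω)
    have h4 : 0 < P (A ω, B ω, C ω) :=
      lt_of_lt_of_le hω (le_probOf p hp0 (fun ω => (A ω, (B ω, C ω))) ω)
    have hgpos : 0 < g (A ω, B ω, C ω) := by
      rw [hg]; dsimp only; positivity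
    have hlog : Real.log (g (A ω, B ω, C ω)) ≤ g (A ω, B ω, C ω) - 1 :=
      Real.log_le_sub_one_of_pos hgpos
    have hlogeq : Real.log (g (A ω, B ω, C ω)) =
        Real.log (pAB (A ω, B ω)) + Real.log (pAC (A ω, C ω))
          - Real.log (pA (A ω)) - Real.log (P (A ω, B ω, C ω)) := by
      rw [hg]; dsimp only
      rw [Real.log_div (by positivity) (by positivity),
        Real.log_mul (ne_of_gt h2) (ne_of_gt h3),
        Real.log_mul (ne_of_gt h1) (ne_of_gt h4)]
      ring
    rw [hlogeq] at hlog
    nlinarith [hlog, hω.le]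
  -- assemble
  rw [shannonH_eq_omega_sum p A, shannonH_eq_omega_sum p (fun ω => (A ω, B ω)),
    shannonH_eq_omega_sum p (fun ω => (A ω, C ω)),
    shannonH_eq_omega_sum p (fun ω => (A ω, (B ω, C ω)))]
  have := Finset.sum_le_sum (fun ω (_ : ω ∈ (univ : Finset Ω)) => step1 ω)
  rw [Finset.sum_sub_distrib] at this
  simp only [hp1] at this
  have hsum :
      ∑ ω : Ω, p ω * (Real.log (pA (A ω)) + Real.log (P (A ω, B ω, C ω))
        - Real.log (pAB (A ω, B ω)) - Real.log (pAC (A ω, C ω)))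
      = (∑ ω : Ω, p ω * Real.log (pA (A ω)))
        + (∑ ω : Ω, p ω * Real.log (P (A ω, B ω, C ω)))
        - (∑ ω : Ω, p ω * Real.log (pAB (A ω, B ω)))
        - (∑ ω : Ω, p ω * Real.log (pAC (A ω, C ω))) := by
    rw [← Finset.sum_add_distrib, ← Finset.sum_sub_distrib, ← Finset.sum_sub_distrib]
    exact Finset.sum_congr rfl fun ω _ => by ring
  rw [hsum] at this
  linarith [this, step2]


/-- For discrete random variables A, B, C on a finite probability space with B and C
independent, H(A|B) + H(A|C) ≥ H(A) + H(A|B,C). -/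
theorem condH_add_condH_ge_of_indep
    {Ω α β γ : Type*} [Fintype Ω] [Fintype α] [Fintype β] [Fintype γ]
    [DecidableEq α] [DecidableEq β] [DecidableEq γ]
    (p : Ω → ℝ) (hp0 : ∀ ω, 0 ≤ p ω) (hp1 : ∑ ω : Ω, p ω = 1)
    (A : Ω → α) (B : Ω → β) (C : Ω → γ)
    (hindep : ∀ (b : β) (c : γ),
      probOf p (fun ω => (B ω, C ω)) (b, c) = probOf p B b * probOf p C c) :
    condH p A B + condH p A C ≥
      shannonH p A + condH p A (fun ω => (B ω, C ω)) := by
  have hBC := shannonH_pair_of_indep p hp1 B C hindep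
  have hsub := submodular p hp0 hp1 A B C
  unfold condH
  linarith
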